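/- arXiv:2210.06241 — 3 statements merged into one kernel-verified Lean document; each statement's English description precedes it below -/
import Mathlib

section
/- For every integer m ≥ 1, if there exists a binary self-orthogonal [63m + 7, 6] code with minimum distance ≥ 32m + 2, then there exists an even-like binary [31m + 5, 5] code with minimum distance ≥ 16m + 2, which violates the Griesmer bound since Σ_{i=0}^{4} ⌈(16m+2)/2^i⌉ = 31m + 6 > 31m + 5; hence no binary self-orthogonal [63m + 7, 6, 32m + 2] code exists. -/
set_option linter.unusedSectionVars false

open Finset
open scoped symmDiff

section Aux

variable {ι : Type} [Fintype ι] [DecidableEq ι]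

/-- support of a word as a Finset -/
def fsupp (x : ι → ZMod 2) : Finset ι := {i | x i ≠ 0}

lemma hn_eq_card (x : ι → ZMod 2) : hammingNorm x = (fsupp x).card := rfl

lemma mem_fsupp {x : ι → ZMod 2} {i : ι} : i ∈ fsupp x ↔ x i ≠ 0 := by
  simp [fsupp]

lemma fsupp_eq_empty {x : ι → ZMod 2} (h : fsupp x = ∅) : x = 0 := by
  funext i
  by_contra hi
  have : i ∈ fsupp x := mem_fsupp.2 hi
  simp [h] at this

lemma fsupp_add (x y : ι → ZMod 2) : fsupp (x + y) = fsupp x ∆ fsupp y := by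
  ext i
  have h : ∀ a b : ZMod 2, (a + b ≠ 0 ↔ (a ≠ 0 ∧ ¬b ≠ 0) ∨ (b ≠ 0 ∧ ¬a ≠ 0)) := by decide
  simp only [mem_fsupp, Finset.mem_symmDiff, mem_fsupp, Pi.add_apply]
  exact h (x i) (y i)

lemma card_symmDiff_add (s t : Finset ι) :
    (s ∆ t).card + 2 * (s ∩ t).card = s.card + t.card := by
  have h1 : s ∆ t = (s ∪ t) \ (s ∩ t) := by
    ext i
    simp only [Finset.mem_symmDiff, Finset.mem_union, Finset.mem_sdiff, Finset.mem_inter]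
    tauto
  have h2 : (s ∩ t) ⊆ (s ∪ t) := (Finset.inter_subset_left).trans Finset.subset_union_left
  rw [h1]
  have h3 := Finset.card_sdiff_of_subset h2
  have h4 := Finset.card_union_add_card_inter s t
  have h5 : (s ∩ t).card ≤ (s ∪ t).card := Finset.card_le_card h2
  omega

lemma inner_eq_card (x y : ι → ZMod 2) :
    ∑ i, x i * y i = ((fsupp x ∩ fsupp y).card : ZMod 2) := by
  have hsub : fsupp x ∩ fsupp y ⊆ univ := Finset.subset_univ _
  have hz : ∀ i ∈ univ, i ∉ fsupp x ∩ fsupp y → x i * y i = 0 := by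
    intro i _ hi
    simp only [Finset.mem_inter, mem_fsupp, not_and_or, not_not] at hi
    rcases hi with h | h <;> simp [h]
  rw [← Finset.sum_subset hsub hz]
  have h1 : ∀ i ∈ fsupp x ∩ fsupp y, x i * y i = 1 := by
    intro i hi
    simp only [Finset.mem_inter, mem_fsupp] at hi
    have : ∀ a b : ZMod 2, a ≠ 0 → b ≠ 0 → a * b = 1 := by decide
    exact this _ _ hi.1 hi.2
  rw [Finset.sum_congr rfl h1, Finset.sum_const, nsmul_eq_mul, mul_one]

lemma norm_comp (c x : ι → ZMod 2) :
    hammingNorm (fun i : {i : ι // c i = 0} => x i.1) = (fsupp x \ fsupp c).card := by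
  rw [hn_eq_card]
  apply Finset.card_bij (fun a _ => a.1)
  · intro a ha
    simp only [mem_fsupp, Finset.mem_filter] at ha ⊢
    simp only [Finset.mem_sdiff, mem_fsupp, not_not]
    exact ⟨ha, a.2⟩
  · intro a _ b _ h
    exact Subtype.ext h
  · intro b hb
    simp only [Finset.mem_sdiff, mem_fsupp, not_not] at hb
    exact ⟨⟨b, hb.2⟩, by simp [mem_fsupp, fsupp, hb.1], rfl⟩

lemma card_subtype_zero (c : ι → ZMod 2) :
    Fintype.card {i : ι // c i = 0} + hammingNorm c = Fintype.card ι := by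
  classical
  rw [Fintype.card_subtype, hn_eq_card]
  have h := Finset.card_filter_add_card_filter_not (s := (univ : Finset ι))
    (p := fun i => c i = 0)
  have h2 : (univ.filter fun i => ¬ c i = 0) = fsupp c := by
    ext i; simp [fsupp]
  rw [h2] at h
  simpa [Finset.card_univ] using h

/-- The residual code construction. -/
lemma residualCode {C : Submodule (ZMod 2) (ι → ZMod 2)} {c : ι → ZMod 2}
    (hc : c ∈ C) (hc0 : c ≠ 0)
    (hmin : ∀ x ∈ C, x ≠ 0 → hammingNorm c ≤ hammingNorm x) :
    ∃ D : Submodule (ZMod 2) ({i : ι // c i = 0} → ZMod 2),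
      Module.finrank (ZMod 2) D + 1 = Module.finrank (ZMod 2) C ∧
      ∀ y ∈ D, y ≠ 0 → ∃ x ∈ C, x ≠ 0 ∧
        hammingNorm y + (fsupp x ∩ fsupp c).card = hammingNorm x ∧
        2 * (fsupp x ∩ fsupp c).card ≤ hammingNorm x := by
  classical
  set σ := {i : ι // c i = 0}
  let π : (ι → ZMod 2) →ₗ[ZMod 2] (σ → ZMod 2) :=
    LinearMap.funLeft (ZMod 2) (ZMod 2) Subtype.val
  let f : C →ₗ[ZMod 2] (σ → ZMod 2) := π.comp C.subtype
  refine ⟨LinearMap.range f, ?_, ?_⟩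
  · have hker : LinearMap.ker f = Submodule.span (ZMod 2) {(⟨c, hc⟩ : C)} := by
      apply le_antisymm
      · intro x hx
        have hx' : ∀ i : σ, (x : ι → ZMod 2) i.1 = 0 := by
          intro i
          have := congrFun (LinearMap.mem_ker.1 hx) i
          exact this
        by_cases h0 : (x : ι → ZMod 2) = 0
        · have : x = 0 := Subtype.ext h0
          simp [this]
        · have hsub : fsupp (x : ι → ZMod 2) ⊆ fsupp c := by
            intro i hi
            rw [mem_fsupp] at hi ⊢
            intro hci
            exact hi (hx' ⟨i, hci⟩)
          have hcard : (fsupp c).card ≤ (fsupp (x : ι → ZMod 2)).card := by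
            have := hmin x x.2 h0
            rwa [hn_eq_card, hn_eq_card] at this
          have heq : fsupp (x : ι → ZMod 2) = fsupp c :=
            Finset.eq_of_subset_of_card_le hsub hcard
          have hxc : (x : ι → ZMod 2) + c = 0 := by
            apply fsupp_eq_empty
            rw [fsupp_add, heq, symmDiff_self]
            rfl
          have hxceq : (x : ι → ZMod 2) = c := by
            funext i
            have := congrFun hxc i
            have h2 : ∀ a b : ZMod 2, a + b = 0 → a = b := by decide
            exact h2 _ _ this
          have : x = (⟨c, hc⟩ : C) := Subtype.ext hxceq
          rw [this]
          exact Submodule.mem_span_singleton_self _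
      · rw [Submodule.span_le]
        intro z hz
        simp only [Set.mem_singleton_iff] at hz
        subst hz
        simp only [SetLike.mem_coe, LinearMap.mem_ker]
        funext i
        exact i.2
    have hrk := LinearMap.finrank_range_add_finrank_ker f
    rw [hker, finrank_span_singleton (by
      intro h
      exact hc0 (congrArg Subtype.val h))] at hrk
    exact hrk
  · rintro y ⟨x, rfl⟩ hy0
    have hx0 : (x : ι → ZMod 2) ≠ 0 := by
      intro h
      apply hy0
      have : x = 0 := Subtype.ext h
      rw [this, map_zero]
    have hxc : (x : ι → ZMod 2) ≠ c := by
      intro h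
      apply hy0
      funext i
      show (x : ι → ZMod 2) i.1 = 0
      rw [h]; exact i.2
    refine ⟨x, x.2, hx0, ?_, ?_⟩
    · have h1 : hammingNorm (f x) = (fsupp (x : ι → ZMod 2) \ fsupp c).card :=
        norm_comp c (x : ι → ZMod 2)
      rw [h1, hn_eq_card]
      exact Finset.card_sdiff_add_card_inter _ _
    · -- x + c is a nonzero codeword, so its weight ≥ wt c
      have hxc0 : (x : ι → ZMod 2) + c ≠ 0 := by
        intro h
        apply hxc
        funext i
        have := congrFun h i
        have h2 : ∀ a b : ZMod 2, a + b = 0 → a = b := by decide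
        exact h2 _ _ this
      have hmem : (x : ι → ZMod 2) + c ∈ C := C.add_mem x.2 hc
      have hge := hmin _ hmem hxc0
      have heq : hammingNorm ((x : ι → ZMod 2) + c) =
          (fsupp (x : ι → ZMod 2) ∆ fsupp c).card := by
        rw [hn_eq_card, fsupp_add]
      have hsd := card_symmDiff_add (fsupp (x : ι → ZMod 2)) (fsupp c)
      rw [hn_eq_card, hn_eq_card] at *
      omega

lemma ceil_step (d i : ℕ) :
    ((d + 1) / 2 + 2 ^ i - 1) / 2 ^ i = (d + 2 ^ (i + 1) - 1) / 2 ^ (i + 1) := by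
  have h1 : 1 ≤ 2 ^ i := Nat.one_le_two_pow
  have h2 : d + 2 ^ (i + 1) - 1 = (d + 1) + (2 ^ i - 1) * 2 := by
    rw [pow_succ]; omega
  rw [h2, pow_succ, mul_comm (2 ^ i) 2, ← Nat.div_div_eq_div_mul,
    Nat.add_mul_div_right _ _ (by norm_num : 0 < 2)]
  congr 1
  omega

/-- Griesmer bound for binary linear codes. -/
lemma griesmer (k : ℕ) : ∀ {ι : Type} [Fintype ι] [DecidableEq ι] (d : ℕ)
    (C : Submodule (ZMod 2) (ι → ZMod 2)), 1 ≤ d →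
    Module.finrank (ZMod 2) C = k →
    (∀ x ∈ C, x ≠ 0 → d ≤ hammingNorm x) →
    ∑ i ∈ Finset.range k, (d + 2 ^ i - 1) / 2 ^ i ≤ Fintype.card ι := by
  induction k with
  | zero => intro ι _ _ d C _ _ _; simp
  | succ k ih =>
    intro ι _ _ d C hd hrk hmin
    classical
    -- pick a minimum-weight nonzero codeword
    have hne : ∃ x, x ∈ C ∧ x ≠ 0 := by
      by_contra h
      push_neg at h
      have : C = ⊥ := by
        rw [Submodule.eq_bot_iff]
        intro x hx
        by_contra hx0
        exact hx0 (h x hx)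
      rw [this, finrank_bot] at hrk
      omega
    obtain ⟨x0, hx0C, hx00⟩ := hne
    set T : Finset (ι → ZMod 2) := univ.filter (fun x => x ∈ C ∧ x ≠ 0) with hT
    have hTne : T.Nonempty := ⟨x0, by simp [hT, hx0C, hx00]⟩
    obtain ⟨c, hcT, hcmin⟩ := Finset.exists_min_image T hammingNorm hTne
    simp only [hT, Finset.mem_filter, Finset.mem_univ, true_and] at hcT
    have hmin' : ∀ x ∈ C, x ≠ 0 → hammingNorm c ≤ hammingNorm x := by
      intro x hx hx0
      exact hcmin x (by simp [hT, hx, hx0])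
    obtain ⟨D, hD, hDmin⟩ := residualCode hcT.1 hcT.2 hmin'
    have hDrk : Module.finrank (ZMod 2) D = k := by omega
    have hDdist : ∀ y ∈ D, y ≠ 0 → (d + 1) / 2 ≤ hammingNorm y := by
      intro y hy hy0
      obtain ⟨x, hxC, hx0, h1, h2⟩ := hDmin y hy hy0
      have := hmin x hxC hx0
      omega
    have hih := ih ((d + 1) / 2) D (by omega) hDrk hDdist
    have hcard := card_subtype_zero c
    have hwc : d ≤ hammingNorm c := hmin c hcT.1 hcT.2
    rw [Finset.sum_range_succ']
    simp only [pow_zero, Nat.div_one]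
    have hrw : ∀ i, (d + 2 ^ (i + 1) - 1) / 2 ^ (i + 1)
        = ((d + 1) / 2 + 2 ^ i - 1) / 2 ^ i := fun i => (ceil_step d i).symm
    rw [Finset.sum_congr rfl (fun i _ => hrw i)]
    omega

end Aux

/-- A binary linear code is self-orthogonal if all pairs of codewords have zero
inner product over `F_2`. -/
def IsSO {n : ℕ} (C : Submodule (ZMod 2) (Fin n → ZMod 2)) : Prop :=
  ∀ x ∈ C, ∀ y ∈ C, ∑ i, x i * y i = 0

/-- `C` has minimum distance exactly `d`. -/
def IsMinDist {n : ℕ} (C : Submodule (ZMod 2) (Fin n → ZMod 2)) (d : ℕ) : Prop :=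
  (∃ x ∈ C, x ≠ 0 ∧ hammingNorm x = d) ∧ ∀ x ∈ C, x ≠ 0 → d ≤ hammingNorm x

/-- For every `m ≥ 1`: a binary self-orthogonal `[63m+7, 6]` code with minimum distance
`≥ 32m+2` would yield an even-like binary `[31m+5, 5]` code with minimum distance
`≥ 16m+2`, violating the Griesmer bound (`Σ_{i=0}^{4} ⌈(16m+2)/2^i⌉ = 31m+6 > 31m+5`);
hence no such self-orthogonal code exists. -/
theorem no_so_63m7 (m : ℕ) (hm : 1 ≤ m) :
    ((∃ C : Submodule (ZMod 2) (Fin (63 * m + 7) → ZMod 2),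
        IsSO C ∧ Module.finrank (ZMod 2) C = 6 ∧
          ∀ x ∈ C, x ≠ 0 → 32 * m + 2 ≤ hammingNorm x) →
      ∃ C : Submodule (ZMod 2) (Fin (31 * m + 5) → ZMod 2),
        Module.finrank (ZMod 2) C = 5 ∧ (∀ x ∈ C, ∑ i, x i = 0) ∧
          ∀ x ∈ C, x ≠ 0 → 16 * m + 2 ≤ hammingNorm x) ∧
    (∑ i ∈ Finset.range 5, (16 * m + 2 + 2 ^ i - 1) / 2 ^ i = 31 * m + 6) ∧
    ¬ ∃ C : Submodule (ZMod 2) (Fin (63 * m + 7) → ZMod 2),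
        IsSO C ∧ Module.finrank (ZMod 2) C = 6 ∧
          ∀ x ∈ C, x ≠ 0 → 32 * m + 2 ≤ hammingNorm x := by
  have harith : ∑ i ∈ Finset.range 5, (16 * m + 2 + 2 ^ i - 1) / 2 ^ i = 31 * m + 6 := by
    rw [Finset.sum_range_succ, Finset.sum_range_succ, Finset.sum_range_succ,
      Finset.sum_range_succ, Finset.sum_range_succ, Finset.sum_range_zero]
    norm_num
    omega
  have key : ¬ ∃ C : Submodule (ZMod 2) (Fin (63 * m + 7) → ZMod 2),
      IsSO C ∧ Module.finrank (ZMod 2) C = 6 ∧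
        ∀ x ∈ C, x ≠ 0 → 32 * m + 2 ≤ hammingNorm x := by
    rintro ⟨C, hSO, hrk, hdist⟩
    classical
    -- even weights: x·y = card of intersection of supports mod 2
    have heven : ∀ x ∈ C, ∀ y ∈ C, 2 ∣ (fsupp x ∩ fsupp y).card := by
      intro x hx y hy
      have h := hSO x hx y hy
      rw [inner_eq_card] at h
      exact (ZMod.natCast_eq_zero_iff _ 2).1 h
    -- min-weight codeword
    have hne : ∃ x, x ∈ C ∧ x ≠ 0 := by
      by_contra h
      push_neg at h
      have : C = ⊥ := by
        rw [Submodule.eq_bot_iff]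
        intro x hx
        by_contra hx0
        exact hx0 (h x hx)
      rw [this, finrank_bot] at hrk
      omega
    obtain ⟨x0, hx0C, hx00⟩ := hne
    set T : Finset (Fin (63 * m + 7) → ZMod 2) := univ.filter (fun x => x ∈ C ∧ x ≠ 0) with hT
    have hTne : T.Nonempty := ⟨x0, by simp [hT, hx0C, hx00]⟩
    obtain ⟨c, hcT, hcmin⟩ := Finset.exists_min_image T hammingNorm hTne
    simp only [hT, Finset.mem_filter, Finset.mem_univ, true_and] at hcT
    have hmin' : ∀ x ∈ C, x ≠ 0 → hammingNorm c ≤ hammingNorm x := by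
      intro x hx hx0
      exact hcmin x (by simp [hT, hx, hx0])
    obtain ⟨D, hD, hDmin⟩ := residualCode hcT.1 hcT.2 hmin'
    have hDrk : Module.finrank (ZMod 2) D = 5 := by omega
    -- residual min distance ≥ 16m+2 using parity
    have hDdist : ∀ y ∈ D, y ≠ 0 → 16 * m + 2 ≤ hammingNorm y := by
      intro y hy hy0
      obtain ⟨x, hxC, hx0, h1, h2⟩ := hDmin y hy hy0
      have hwx := hdist x hxC hx0
      -- wt x even
      have hxx : 2 ∣ (fsupp x ∩ fsupp x).card := heven x hxC x hxC
      rw [Finset.inter_self] at hxx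
      have hwxe : 2 ∣ hammingNorm x := by rw [hn_eq_card]; exact hxx
      have hxc : 2 ∣ (fsupp x ∩ fsupp c).card := heven x hxC c hcT.1
      omega
    have hgr := griesmer 5 (16 * m + 2) D (by omega) hDrk hDdist
    have hcard := card_subtype_zero c
    have hwc : 32 * m + 2 ≤ hammingNorm c := hdist c hcT.1 hcT.2
    have harith' : ∑ i ∈ Finset.range 5, (16 * m + 2 + 2 ^ i - 1) / 2 ^ i = 31 * m + 6 :=
      harith
    rw [harith'] at hgr
    simp only [Fintype.card_fin] at hcard
    omega
  exact ⟨fun h => absurd h key, harith, key⟩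
end

section
/- If there exists a binary self-orthogonal [53, 5, 26] code, then for every m ≥ 1 there exists a binary self-orthogonal [31m + 22, 5, 16m + 10] code, and by the Griesmer bound d_{so}(31m + 22, 5) = d(31m + 22, 5) = 16m + 10. -/
open Finset

lemma zmod2_cases : ∀ a : ZMod 2, a = 0 ∨ a = 1 := by decide
lemma zmod2_ne_zero : ∀ a : ZMod 2, a ≠ 0 → a = 1 := by decide

lemma two_mul_card_fiber_eq {M : Type*} [AddCommGroup M] [Fintype M] [DecidableEq M]
    (f : M →+ ZMod 2) (x0 : M) (h0 : f x0 = 1) :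
    2 * #{x : M | f x = 1} = Fintype.card M := by
  have hbij : #{x : M | f x = 1} = #{x : M | f x = 0} := by
    apply Finset.card_nbij' (fun x => x + x0) (fun x => x - x0)
    · intro a ha
      simp only [mem_coe, mem_filter, mem_univ, true_and] at ha ⊢
      rw [map_add, ha, h0]; decide
    · intro a ha
      simp only [mem_coe, mem_filter, mem_univ, true_and] at ha ⊢
      rw [map_sub, ha, h0]; decide
    · intro a _; simp
    · intro a _; simp
  have hsplit := Finset.card_filter_add_card_filter_not
    (s := (univ : Finset M)) (p := fun x => f x = 1)
  rw [Finset.card_univ] at hsplit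
  have heq : #{x : M | ¬ f x = 1} = #{x : M | f x = 0} := by
    congr 1
    apply Finset.filter_congr
    intro x _
    rcases zmod2_cases (f x) with h | h <;> simp [h]
  omega

lemma two_mul_card_fiber_le {M : Type*} [AddCommGroup M] [Fintype M] [DecidableEq M]
    (f : M →+ ZMod 2) :
    2 * #{x : M | f x = 1} ≤ Fintype.card M := by
  by_cases h : ∃ x0, f x0 = 1
  · exact (two_mul_card_fiber_eq f h.choose h.choose_spec).le
  · push_neg at h
    have : #{x : M | f x = 1} = 0 := by
      rw [Finset.card_eq_zero, Finset.filter_eq_empty_iff]; intro x _; exact h x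
    simp [this]

lemma card_filter_subtype {α : Type*} [Fintype α] (p : α → Prop) [DecidablePred p]
    (q : α → Prop) [DecidablePred q] :
    #{x : {a // p a} | q x.val} = #{a : α | p a ∧ q a} := by
  apply Finset.card_nbij (fun x => x.val)
  · rintro ⟨a, ha⟩ h; simp only [mem_coe, mem_filter, mem_univ, true_and] at h ⊢; exact ⟨ha, h⟩
  · rintro ⟨a, ha⟩ - ⟨b, hb⟩ - h; simpa using h
  · rintro a ha
    simp only [coe_filter, mem_univ, true_and, Set.mem_setOf_eq] at ha
    exact ⟨⟨a, ha.1⟩, by simpa using ha.2⟩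

lemma hammingNorm_comp_equiv {α β : Type*} [Fintype α] [Fintype β] [DecidableEq α] [DecidableEq β]
    (σ : α ≃ β) (f : β → ZMod 2) :
    hammingNorm (f ∘ σ) = hammingNorm f := by
  unfold hammingNorm
  apply Finset.card_nbij σ
  · intro a ha; simpa using by simpa using ha
  · intro a _ b _ h; exact σ.injective h
  · intro b hb
    simp only [coe_filter, mem_univ, true_and, Set.mem_setOf_eq] at hb ⊢
    exact ⟨σ.symm b, by simpa using hb⟩

lemma hammingNorm_sumElim {α β : Type*} [Fintype α] [Fintype β] [DecidableEq α] [DecidableEq β]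
    (f : α → ZMod 2) (g : β → ZMod 2) :
    hammingNorm (Sum.elim f g) = hammingNorm f + hammingNorm g := by
  unfold hammingNorm
  rw [← Finset.univ_disjSum_univ]
  have : (Finset.disjSum univ univ).filter (fun i => Sum.elim f g i ≠ 0) =
      Finset.disjSum (univ.filter fun a => f a ≠ 0) (univ.filter fun b => g b ≠ 0) := by
    ext x; cases x <;> simp
  rw [this, Finset.card_disjSum]

lemma sum_mul_self_eval (i j : Fin 5) :
    ∑ u : Fin 5 → ZMod 2, u i * u j = 0 := by
  obtain ⟨k, hki, hkj⟩ : ∃ k : Fin 5, k ≠ i ∧ k ≠ j := by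
    revert i j; decide
  apply Finset.sum_ninvolution (fun u => u + (Pi.single k 1 : Fin 5 → ZMod 2))
  · intro u
    have h1 : (u + (Pi.single k 1 : Fin 5 → ZMod 2)) i = u i := by simp [Pi.single_apply, hki.symm]
    have h2 : (u + (Pi.single k 1 : Fin 5 → ZMod 2)) j = u j := by simp [Pi.single_apply, hkj.symm]
    rw [h1, h2]
    exact (by decide : ∀ a b : ZMod 2, a * b + a * b = 0) _ _
  · intro u _ hc
    have := congrFun hc k
    simp at this
  · intro u; exact Finset.mem_univ _
  · intro u
    funext t
    by_cases ht : t = k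
    · simp [Pi.single_apply, ht, add_assoc, (by decide : (1:ZMod 2)+1 = 0)]
    · simp [Pi.single_apply, ht]

lemma card_submodule_pow {ι : Type*} [Fintype ι] (C : Submodule (ZMod 2) (ι → ZMod 2))
    [Fintype C] : Fintype.card C = 2 ^ Module.finrank (ZMod 2) C := by
  have b := Module.finBasis (ZMod 2) C
  rw [Module.card_fintype b, ZMod.card, Fintype.card_fin]

lemma plotkin {ι : Type*} [Fintype ι] [DecidableEq ι] (C : Submodule (ZMod 2) (ι → ZMod 2))
    [Fintype C] [DecidableEq C] (d : ℕ)
    (hd : ∀ x ∈ C, x ≠ 0 → d ≤ hammingNorm x) :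
    2 * ((Fintype.card C - 1) * d) ≤ Fintype.card ι * Fintype.card C := by
  have key : ∀ i : ι, 2 * #{x : C | (x : ι → ZMod 2) i ≠ 0} ≤ Fintype.card C := by
    intro i
    have h := two_mul_card_fiber_le (M := C) ((LinearMap.proj i ∘ₗ C.subtype).toAddMonoidHom)
    have : #{x : C | ((LinearMap.proj i ∘ₗ C.subtype).toAddMonoidHom) x = 1}
        = #{x : C | (x : ι → ZMod 2) i ≠ 0} := by
      congr 1
      apply Finset.filter_congr
      intro x _
      constructor
      · intro hx; simp only [LinearMap.toAddMonoidHom_coe, LinearMap.coe_comp,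
          Function.comp_apply, LinearMap.proj_apply, Submodule.coe_subtype] at hx
        rw [hx]; decide
      · intro hx
        have := zmod2_ne_zero _ hx
        simpa using this
    rw [this] at h
    exact h
  have hsum : ∑ x : C, hammingNorm (x : ι → ZMod 2)
      = ∑ i : ι, #{x : C | (x : ι → ZMod 2) i ≠ 0} := by
    simp_rw [hammingNorm, Finset.card_filter]
    rw [Finset.sum_comm]
  have hlow : (Fintype.card C - 1) * d ≤ ∑ x : C, hammingNorm (x : ι → ZMod 2) := by
    have h1 : ∑ x ∈ {x : C | x ≠ 0}, hammingNorm (x : ι → ZMod 2)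
        ≤ ∑ x : C, hammingNorm (x : ι → ZMod 2) :=
      Finset.sum_le_sum_of_subset (Finset.filter_subset _ _)
    have h2 : (Fintype.card C - 1) * d ≤ ∑ x ∈ {x : C | x ≠ 0}, hammingNorm (x : ι → ZMod 2) := by
      have hcard : #{x : C | x ≠ 0} = Fintype.card C - 1 := by
        rw [Finset.filter_ne', Finset.card_erase_of_mem (Finset.mem_univ _), Finset.card_univ]
      calc (Fintype.card C - 1) * d = #{x : C | x ≠ 0} * d := by rw [hcard]
        _ ≤ ∑ x ∈ {x : C | x ≠ 0}, hammingNorm (x : ι → ZMod 2) := by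
            apply Finset.card_nsmul_le_sum
            intro x hx
            simp only [Finset.mem_filter, Finset.mem_univ, true_and] at hx
            exact hd x x.2 (fun h => hx (Subtype.ext h))
    exact h2.trans h1
  calc 2 * ((Fintype.card C - 1) * d) ≤ 2 * ∑ x : C, hammingNorm (x : ι → ZMod 2) := by omega
    _ = ∑ i : ι, 2 * #{x : C | (x : ι → ZMod 2) i ≠ 0} := by rw [hsum, Finset.mul_sum]
    _ ≤ ∑ _i : ι, Fintype.card C := Finset.sum_le_sum (fun i _ => key i)
    _ = Fintype.card ι * Fintype.card C := by rw [Finset.sum_const, smul_eq_mul, Finset.card_univ]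

lemma card_filter_split {α : Type*} [Fintype α] (p q : α → Prop)
    [DecidablePred p] [DecidablePred q] :
    #{a : α | p a} = #{a : α | p a ∧ q a} + #{a : α | p a ∧ ¬ q a} := by
  rw [← Finset.filter_filter, ← Finset.filter_filter,
    Finset.card_filter_add_card_filter_not]

lemma zmod2_add_ne {s t : ZMod 2} (ht : t ≠ 0) : s + t ≠ 0 ↔ s = 0 := by
  revert s t; decide

lemma upper {ι : Type*} [Fintype ι] [DecidableEq ι] (m : ℕ)
    (hcard : Fintype.card ι = 31 * m + 22)
    (C : Submodule (ZMod 2) (ι → ZMod 2)) (hk : Module.finrank (ZMod 2) C = 5)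
    {d : ℕ} (hex : ∃ x ∈ C, x ≠ 0 ∧ hammingNorm x = d)
    (hlb : ∀ x ∈ C, x ≠ 0 → d ≤ hammingNorm x) :
    d ≤ 16 * m + 10 := by
  by_contra hcon
  push_neg at hcon
  obtain ⟨c, hcC, hc0, hcw⟩ := hex
  classical
  set π : (ι → ZMod 2) →ₗ[ZMod 2] ({i : ι // c i = 0} → ZMod 2) :=
    LinearMap.funLeft (ZMod 2) (ZMod 2) Subtype.val with hπdef
  have hπc : π c = 0 := by
    funext j; exact j.2
  have hker : LinearMap.ker (π.domRestrict C) = Submodule.span (ZMod 2) {(⟨c, hcC⟩ : C)} := by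
    apply le_antisymm
    · intro x hx
      rw [LinearMap.mem_ker] at hx
      have hx0 : ∀ i : ι, c i = 0 → (x : ι → ZMod 2) i = 0 := by
        intro i hi
        exact congrFun hx ⟨i, hi⟩
      by_cases hx' : (x : ι → ZMod 2) = 0
      · have : x = 0 := Subtype.ext hx'
        rw [this]; exact Submodule.zero_mem _
      · have hsub : ({i : ι | (x : ι → ZMod 2) i ≠ 0} : Finset ι)
            ⊆ ({i : ι | c i ≠ 0} : Finset ι) := by
          intro i hi
          simp only [mem_filter, mem_univ, true_and] at hi ⊢
          intro hci; exact hi (hx0 i hci)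
        have hcards : hammingNorm c ≤ hammingNorm (x : ι → ZMod 2) := by
          rw [hcw]; exact hlb _ x.2 hx'
        have hfeq : ({i : ι | (x : ι → ZMod 2) i ≠ 0} : Finset ι)
            = ({i : ι | c i ≠ 0} : Finset ι) :=
          Finset.eq_of_subset_of_card_le hsub hcards
        have heq : (x : ι → ZMod 2) = c := by
          funext i
          by_cases hi : c i = 0
          · rw [hx0 i hi, hi]
          · have hix : i ∈ ({i : ι | (x : ι → ZMod 2) i ≠ 0} : Finset ι) := by
              rw [hfeq]; simp [hi]
            simp only [mem_filter, mem_univ, true_and] at hix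
            rw [zmod2_ne_zero _ hix, zmod2_ne_zero _ hi]
        exact Submodule.subset_span (by simp only [Set.mem_singleton_iff]; exact Subtype.ext heq)
    · rw [Submodule.span_le, Set.singleton_subset_iff, SetLike.mem_coe, LinearMap.mem_ker]
      exact hπc
  have hc0' : (⟨c, hcC⟩ : C) ≠ 0 := fun h => hc0 (congrArg Subtype.val h)
  have hrange : Module.finrank (ZMod 2) (LinearMap.range (π.domRestrict C)) = 4 := by
    have h5 := LinearMap.finrank_range_add_finrank_ker (π.domRestrict C)
    rw [hker, finrank_span_singleton hc0', hk] at h5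
    omega
  have hres : ∀ y ∈ LinearMap.range (π.domRestrict C), y ≠ 0 → (d + 1) / 2 ≤ hammingNorm y := by
    rintro y ⟨x, rfl⟩ hy0
    have hx0 : (x : ι → ZMod 2) ≠ 0 := by
      intro h
      apply hy0
      have : x = 0 := Subtype.ext h
      rw [this, map_zero]
    have hxc : (x : ι → ZMod 2) ≠ c := by
      intro h
      apply hy0
      show π (x : ι → ZMod 2) = 0
      rw [h, hπc]
    have hxc0 : (x : ι → ZMod 2) + c ≠ 0 := by
      intro h
      apply hxc
      funext i
      have := congrFun h i
      revert this
      exact (by decide : ∀ s t : ZMod 2, s + t = 0 → s = t) _ _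
    have hxcC : (x : ι → ZMod 2) + c ∈ C := C.add_mem x.2 hcC
    -- weights
    set a := #{i : ι | (x : ι → ZMod 2) i ≠ 0 ∧ c i ≠ 0} with ha
    set b := #{i : ι | (x : ι → ZMod 2) i ≠ 0 ∧ ¬ c i ≠ 0} with hb
    have hwx : hammingNorm (x : ι → ZMod 2) = a + b := card_filter_split _ _
    have hwc : hammingNorm c = #{i : ι | c i ≠ 0 ∧ (x : ι → ZMod 2) i ≠ 0}
        + #{i : ι | c i ≠ 0 ∧ ¬ (x : ι → ZMod 2) i ≠ 0} := card_filter_split _ _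
    have hac : #{i : ι | c i ≠ 0 ∧ (x : ι → ZMod 2) i ≠ 0} = a := by
      apply Finset.card_nbij (fun i => i) <;>
        simp +contextual [Set.MapsTo, Set.InjOn, Set.SurjOn, Set.subset_def, and_comm]
    have hwxc : hammingNorm ((x : ι → ZMod 2) + c)
        = #{i : ι | c i ≠ 0 ∧ ¬ (x : ι → ZMod 2) i ≠ 0} + b := by
      unfold hammingNorm
      rw [card_filter_split (fun i => ((x : ι → ZMod 2) + c) i ≠ 0) (fun i => c i ≠ 0)]
      congr 1
      · apply Finset.card_nbij (fun i => i)
        · intro i hi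
          simp only [mem_coe, mem_filter, mem_univ, true_and, Pi.add_apply] at hi ⊢
          refine ⟨hi.2, ?_⟩
          rw [not_not]
          exact (zmod2_add_ne hi.2).1 hi.1
        · intro i _ j _ h; exact h
        · intro i hi
          simp only [coe_filter, mem_univ, true_and, Set.mem_setOf_eq, not_not] at hi ⊢
          refine ⟨i, ⟨?_, hi.1⟩, rfl⟩
          show ((x : ι → ZMod 2) i + c i) ≠ 0
          rw [hi.2, zero_add]; exact hi.1
      · rw [hb]
        congr 1
        apply Finset.filter_congr
        intro i _
        simp only [not_not, Pi.add_apply]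
        constructor
        · rintro ⟨h1, h2⟩; rw [h2, add_zero] at h1; exact ⟨h1, h2⟩
        · rintro ⟨h1, h2⟩; rw [h2, add_zero]; exact ⟨h1, rfl⟩
    have hby : hammingNorm (π.domRestrict C x) = b := by
      show hammingNorm (fun j : {i : ι // c i = 0} => (x : ι → ZMod 2) j.val) = b
      unfold hammingNorm
      rw [card_filter_subtype (fun i => c i = 0) (fun i => (x : ι → ZMod 2) i ≠ 0)]
      apply Finset.card_nbij (fun i => i) <;>
        simp +contextual [Set.MapsTo, Set.InjOn, Set.SurjOn, Set.subset_def, and_comm]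
    have hd1 : d ≤ a + b := hwx ▸ hlb _ x.2 hx0
    have hd2 : d ≤ #{i : ι | c i ≠ 0 ∧ ¬ (x : ι → ZMod 2) i ≠ 0} + b :=
      hwxc ▸ hlb _ hxcC hxc0
    rw [hby]
    rw [hwc, hac] at hcw
    omega
  haveI : Fintype (LinearMap.range (π.domRestrict C)) := Fintype.ofFinite _
  have hplot := plotkin (LinearMap.range (π.domRestrict C)) ((d + 1) / 2) hres
  rw [card_submodule_pow, hrange] at hplot
  have hcard' : Fintype.card {i : ι // c i = 0} = 31 * m + 22 - d := by
    rw [Fintype.card_subtype]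
    have hsplit := card_filter_split (fun _ : ι => True) (fun i => c i = 0)
    simp only [Finset.filter_true_of_mem (fun _ _ => trivial), Finset.card_univ, true_and] at hsplit
    have : #{i : ι | ¬ c i = 0} = d := by rw [← hcw]; rfl
    rw [hcard] at hsplit
    omega
  rw [hcard'] at hplot
  have hdn : d ≤ 31 * m + 22 := by
    rw [← hcw, ← hcard]; exact hammingNorm_le_card_fintype
  have h16 : (2:ℕ) ^ 4 = 16 := by norm_num
  rw [h16] at hplot
  omega

/-- inner product with `v` -/
def bil (v : Fin 5 → ZMod 2) : (Fin 5 → ZMod 2) →+ ZMod 2 where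
  toFun u := ∑ i, v i * u i
  map_zero' := by simp
  map_add' u w := by simp [mul_add, Finset.sum_add_distrib]

lemma bil_surj {v : Fin 5 → ZMod 2} (hv : v ≠ 0) : ∃ u, bil v u = 1 := by
  obtain ⟨i, hi⟩ : ∃ i, v i ≠ 0 := by
    by_contra hc; push_neg at hc; exact hv (funext hc)
  refine ⟨(Pi.single i 1 : Fin 5 → ZMod 2), ?_⟩
  show ∑ j, v j * (Pi.single i 1 : Fin 5 → ZMod 2) j = 1
  rw [Finset.sum_eq_single i]
  · rw [Pi.single_eq_same, mul_one]; exact zmod2_ne_zero _ hi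
  · intro j _ hj; rw [Pi.single_eq_of_ne hj, mul_zero]
  · intro hmem; exact absurd (Finset.mem_univ i) hmem

lemma count16 {v : Fin 5 → ZMod 2} (hv : v ≠ 0) :
    #{u : Fin 5 → ZMod 2 | bil v u = 1} = 16 := by
  obtain ⟨u0, hu0⟩ := bil_surj hv
  have h := two_mul_card_fiber_eq (bil v) u0 hu0
  have hcard : Fintype.card (Fin 5 → ZMod 2) = 32 := by simp [Fintype.card_fun]
  omega

lemma szero (v w : Fin 5 → ZMod 2) :
    ∑ u : Fin 5 → ZMod 2, bil v u * bil w u = 0 := by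
  have step : ∀ u : Fin 5 → ZMod 2,
      bil v u * bil w u = ∑ i, ∑ j, v i * w j * (u i * u j) := by
    intro u
    show (∑ i, v i * u i) * (∑ j, w j * u j) = _
    rw [Finset.sum_mul_sum]
    exact Finset.sum_congr rfl fun i _ => Finset.sum_congr rfl fun j _ => by ring
  calc ∑ u : Fin 5 → ZMod 2, bil v u * bil w u
      = ∑ u : Fin 5 → ZMod 2, ∑ i, ∑ j, v i * w j * (u i * u j) :=
        Finset.sum_congr rfl fun u _ => step u
    _ = ∑ i, ∑ u : Fin 5 → ZMod 2, ∑ j, v i * w j * (u i * u j) := Finset.sum_comm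
    _ = ∑ i : Fin 5, ∑ j : Fin 5, ∑ u : Fin 5 → ZMod 2, v i * w j * (u i * u j) :=
        Finset.sum_congr rfl fun i _ => Finset.sum_comm
    _ = 0 := by
        apply Finset.sum_eq_zero; intro i _
        apply Finset.sum_eq_zero; intro j _
        rw [← Finset.mul_sum, sum_mul_self_eval, mul_zero]



/-- `d(n,k)`: the largest minimum distance among binary `[n,k]` linear codes. -/
noncomputable def dLin (n k : ℕ) : ℕ :=
  sSup {d | ∃ C : Submodule (ZMod 2) (Fin n → ZMod 2),
    Module.finrank (ZMod 2) C = k ∧ IsMinDist C d}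

/-- `d_so(n,k)`: the largest minimum distance among binary self-orthogonal `[n,k]` codes. -/
noncomputable def dSO (n k : ℕ) : ℕ :=
  sSup {d | ∃ C : Submodule (ZMod 2) (Fin n → ZMod 2),
    IsSO C ∧ Module.finrank (ZMod 2) C = k ∧ IsMinDist C d}

set_option maxHeartbeats 2000000 in
lemma construct (m' : ℕ)
    (C53 : Submodule (ZMod 2) (Fin 53 → ZMod 2)) (hso : IsSO C53)
    (hk : Module.finrank (ZMod 2) C53 = 5) (hd : IsMinDist C53 26) :
    ∃ C : Submodule (ZMod 2) (Fin (31 * (m' + 1) + 22) → ZMod 2),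
      IsSO C ∧ Module.finrank (ZMod 2) C = 5 ∧ IsMinDist C (16 * (m' + 1) + 10) := by
  classical
  have hcardU : Fintype.card {u : Fin 5 → ZMod 2 // u ≠ 0} = 31 := by
    have h32 : Fintype.card (Fin 5 → ZMod 2) = 32 := by simp [Fintype.card_fun]
    have := Fintype.card_subtype_compl (α := Fin 5 → ZMod 2) (fun u => u = 0)
    rw [h32, Fintype.card_subtype_eq] at this
    exact this
  have hcardI : Fintype.card (Fin 53 ⊕ (Fin m' × {u : Fin 5 → ZMod 2 // u ≠ 0}))
      = 31 * (m' + 1) + 22 := by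
    rw [Fintype.card_sum, Fintype.card_prod, hcardU, Fintype.card_fin, Fintype.card_fin]
    ring
  set σ : Fin (31 * (m' + 1) + 22) ≃ (Fin 53 ⊕ (Fin m' × {u : Fin 5 → ZMod 2 // u ≠ 0})) :=
    Fintype.equivOfCardEq (by rw [hcardI, Fintype.card_fin]) with hσ
  set e : (Fin 5 → ZMod 2) ≃ₗ[ZMod 2] C53 :=
    (Module.finBasisOfFinrankEq (ZMod 2) C53 hk).equivFun.symm with he
  set G : (Fin 5 → ZMod 2) →ₗ[ZMod 2]
      ((Fin 53 ⊕ (Fin m' × {u : Fin 5 → ZMod 2 // u ≠ 0})) → ZMod 2) :=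
    { toFun := fun v => Sum.elim (fun a => (e v : Fin 53 → ZMod 2) a)
        (fun p => bil v p.2.val),
      map_add' := by
        intro v w
        funext z
        cases z with
        | inl a => simp
        | inr p => simp [bil, add_mul, Finset.sum_add_distrib]
      map_smul' := by
        intro r v
        funext z
        cases z with
        | inl a => simp
        | inr p => simp [bil, Finset.mul_sum, mul_assoc] } with hG
  set Gf : (Fin 5 → ZMod 2) →ₗ[ZMod 2] (Fin (31 * (m' + 1) + 22) → ZMod 2) :=
    (LinearMap.funLeft (ZMod 2) (ZMod 2) σ).comp G with hGf
  have hGinj : Function.Injective Gf := by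
    intro v w hvw
    have hz : Gf (v - w) = 0 := by rw [map_sub, hvw, sub_self]
    have hall : ∀ z, G (v - w) z = 0 := by
      intro z
      have h1 : G (v - w) (σ (σ.symm z)) = 0 := congrFun hz (σ.symm z)
      rwa [Equiv.apply_symm_apply] at h1
    have h53 : ((e (v - w) : C53) : Fin 53 → ZMod 2) = 0 :=
      funext fun a => hall (Sum.inl a)
    have h2 : e (v - w) = 0 := Subtype.ext h53
    have h3 : v - w = 0 := by simpa using congrArg e.symm h2
    exact sub_eq_zero.mp h3
  have hweight : ∀ v : Fin 5 → ZMod 2, v ≠ 0 →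
      hammingNorm (Gf v) = hammingNorm ((e v : C53) : Fin 53 → ZMod 2) + 16 * m' := by
    intro v hv
    have h1 : hammingNorm (Gf v) = hammingNorm (G v) := hammingNorm_comp_equiv σ (G v)
    have h2 : hammingNorm (G v) = hammingNorm (fun a => ((e v : C53) : Fin 53 → ZMod 2) a)
        + hammingNorm (fun p : Fin m' × {u : Fin 5 → ZMod 2 // u ≠ 0} => bil v p.2.val) :=
      hammingNorm_sumElim _ _
    have h16 : #{u : {u : Fin 5 → ZMod 2 // u ≠ 0} | bil v u.val ≠ 0} = 16 := by
      rw [card_filter_subtype (fun u : Fin 5 → ZMod 2 => u ≠ 0) (fun u => bil v u ≠ 0)]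
      rw [← count16 hv]
      congr 1
      apply Finset.filter_congr
      intro u _
      constructor
      · rintro ⟨_, h2⟩; exact zmod2_ne_zero _ h2
      · intro h1
        refine ⟨?_, by rw [h1]; decide⟩
        intro hu0
        rw [hu0, map_zero] at h1
        exact absurd h1 (by decide)
    have h3 : hammingNorm
        (fun p : Fin m' × {u : Fin 5 → ZMod 2 // u ≠ 0} => bil v p.2.val) = 16 * m' := by
      unfold hammingNorm
      have hprod : ({p : Fin m' × {u : Fin 5 → ZMod 2 // u ≠ 0} | bil v p.2.val ≠ 0} : Finset _)
          = (univ : Finset (Fin m')) ×ˢ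
            ({u : {u : Fin 5 → ZMod 2 // u ≠ 0} | bil v u.val ≠ 0} : Finset _) := by
        ext p; simp [Finset.mem_product]
      rw [hprod, Finset.card_product, h16, Finset.card_univ, Fintype.card_fin]
      ring
    rw [h1, h2, h3]
  have hSO : IsSO (LinearMap.range Gf) := by
    intro x hx y hy
    obtain ⟨v, rfl⟩ := hx
    obtain ⟨w, rfl⟩ := hy
    have hre : ∑ i, Gf v i * Gf w i = ∑ z, G v z * G w z :=
      Equiv.sum_comp σ (fun z => G v z * G w z)
    rw [hre, Fintype.sum_sum_type]
    have hgl : ∀ (v' : Fin 5 → ZMod 2) (a : Fin 53),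
        G v' (Sum.inl a) = ((e v' : C53) : Fin 53 → ZMod 2) a := fun _ _ => rfl
    have hgr : ∀ (v' : Fin 5 → ZMod 2) (p : Fin m' × {u : Fin 5 → ZMod 2 // u ≠ 0}),
        G v' (Sum.inr p) = bil v' p.2.val := fun _ _ => rfl
    simp only [hgl, hgr]
    have hA : ∑ a : Fin 53, ((e v : C53) : Fin 53 → ZMod 2) a
        * ((e w : C53) : Fin 53 → ZMod 2) a = 0 := hso _ (e v).2 _ (e w).2
    have hU0 : ∑ u : {u : Fin 5 → ZMod 2 // u ≠ 0}, bil v u.val * bil w u.val = 0 := by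
      have hsub : ∑ u ∈ ({u : Fin 5 → ZMod 2 | u ≠ 0} : Finset _), bil v u * bil w u
          = ∑ u : {u : Fin 5 → ZMod 2 // u ≠ 0}, bil v u.val * bil w u.val :=
        Finset.sum_subtype _ (by simp) _
      rw [← hsub]
      rw [Finset.sum_subset (Finset.filter_subset _ _)]
      · exact szero v w
      · intro u _ hu
        simp only [Finset.mem_filter, Finset.mem_univ, true_and, not_not] at hu
        rw [hu, map_zero, zero_mul]
    have hB : ∑ p : Fin m' × {u : Fin 5 → ZMod 2 // u ≠ 0},
        bil v p.2.val * bil w p.2.val = 0 := by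
      rw [Fintype.sum_prod_type]
      simp [hU0]
    rw [hB, hA, add_zero]
  have harith : 26 + 16 * m' = 16 * (m' + 1) + 10 := by ring
  refine ⟨LinearMap.range Gf, hSO, ?_, ?_, ?_⟩
  · rw [LinearMap.finrank_range_of_inj hGinj, Module.finrank_fintype_fun_eq_card,
      Fintype.card_fin]
  · obtain ⟨x0, hx0C, hx00, hx0w⟩ := hd.1
    set v0 := e.symm ⟨x0, hx0C⟩ with hv0def
    have hev0 : e v0 = ⟨x0, hx0C⟩ := e.apply_symm_apply _
    have hv0 : v0 ≠ 0 := by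
      intro h
      apply hx00
      rw [h, map_zero] at hev0
      exact congrArg Subtype.val hev0.symm
    refine ⟨Gf v0, LinearMap.mem_range_self _ _, ?_, ?_⟩
    · intro h; exact hv0 (hGinj (by rw [h, map_zero]))
    · rw [hweight v0 hv0, hev0]
      show hammingNorm x0 + 16 * m' = _
      rw [hx0w, harith]
  · intro x hx hx0
    obtain ⟨v, rfl⟩ := hx
    have hv : v ≠ 0 := fun h => hx0 (by rw [h, map_zero])
    rw [hweight v hv]
    have h26 : 26 ≤ hammingNorm ((e v : C53) : Fin 53 → ZMod 2) := by
      apply hd.2 _ (e v).2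
      intro h
      apply hv
      have h2 : e v = 0 := Subtype.ext h
      simpa using congrArg e.symm h2
    omega

/-- If there exists a binary self-orthogonal `[53, 5, 26]` code, then for every `m ≥ 1`
there exists a binary self-orthogonal `[31m + 22, 5, 16m + 10]` code; combined with the
Griesmer bound, `d_so(31m + 22, 5) = d(31m + 22, 5) = 16m + 10`. -/
theorem dso_31m22 
    (h : ∃ C : Submodule (ZMod 2) (Fin 53 → ZMod 2),
      IsSO C ∧ Module.finrank (ZMod 2) C = 5 ∧ IsMinDist C 26) :
    ∀ m : ℕ, 1 ≤ m →
      (∃ C : Submodule (ZMod 2) (Fin (31 * m + 22) → ZMod 2),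
        IsSO C ∧ Module.finrank (ZMod 2) C = 5 ∧ IsMinDist C (16 * m + 10)) ∧
      dSO (31 * m + 22) 5 = 16 * m + 10 ∧ dLin (31 * m + 22) 5 = 16 * m + 10 := by
  obtain ⟨C53, hso53, hk53, hd53⟩ := h
  intro m hm
  obtain ⟨m', rfl⟩ : ∃ m', m = m' + 1 := ⟨m - 1, by omega⟩
  obtain ⟨C, hCso, hCk, hCd⟩ := construct m' C53 hso53 hk53 hd53
  refine ⟨⟨C, hCso, hCk, hCd⟩, ?_, ?_⟩
  · rw [dSO]
    have hub : ∀ d' ∈ {d | ∃ C' : Submodule (ZMod 2) (Fin (31 * (m' + 1) + 22) → ZMod 2),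
        IsSO C' ∧ Module.finrank (ZMod 2) C' = 5 ∧ IsMinDist C' d}, d' ≤ 16 * (m' + 1) + 10 := by
      rintro d' ⟨C', _, hk', hd'⟩
      exact upper (m' + 1) (Fintype.card_fin _) C' hk' hd'.1 hd'.2
    have hmem : (16 * (m' + 1) + 10) ∈ {d | ∃ C' : Submodule (ZMod 2)
        (Fin (31 * (m' + 1) + 22) → ZMod 2),
        IsSO C' ∧ Module.finrank (ZMod 2) C' = 5 ∧ IsMinDist C' d} := ⟨C, hCso, hCk, hCd⟩
    exact le_antisymm (csSup_le ⟨_, hmem⟩ hub) (le_csSup ⟨_, hub⟩ hmem)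
  · rw [dLin]
    have hub : ∀ d' ∈ {d | ∃ C' : Submodule (ZMod 2) (Fin (31 * (m' + 1) + 22) → ZMod 2),
        Module.finrank (ZMod 2) C' = 5 ∧ IsMinDist C' d}, d' ≤ 16 * (m' + 1) + 10 := by
      rintro d' ⟨C', hk', hd'⟩
      exact upper (m' + 1) (Fintype.card_fin _) C' hk' hd'.1 hd'.2
    have hmem : (16 * (m' + 1) + 10) ∈ {d | ∃ C' : Submodule (ZMod 2)
        (Fin (31 * (m' + 1) + 22) → ZMod 2),
        Module.finrank (ZMod 2) C' = 5 ∧ IsMinDist C' d} := ⟨C, hCk, hCd⟩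
    exact le_antisymm (csSup_le ⟨_, hmem⟩ hub) (le_csSup ⟨_, hub⟩ hmem)
end

section
/- For m ≥ 1, any binary linear code of length 31m + 13 and dimension 5 has minimum distance at most 16m + 6; and no even-like binary [15m + 7, 4] code has minimum distance ≥ 8m + 4 (since the Griesmer bound gives d(15m+7,4) ≤ 8m+3). Consequently, combined with the shortening lemma, there is no binary self-orthogonal [31m + 13, 5, 16m + 6] code. -/
open Finset

lemma zmod2_add_ne_s15 (a b : ZMod 2) (ha : a ≠ 0) (hb : b ≠ 0) : a + b = 0 := by revert a b; decide

lemma counting {n k : ℕ} (hk : 1 ≤ k) (C : Submodule (ZMod 2) (Fin n → ZMod 2))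
    (hfr : Module.finrank (ZMod 2) C = k) {d : ℕ}
    (hd : ∀ x ∈ C, x ≠ 0 → d ≤ hammingNorm x) : (2 ^ k - 1) * d ≤ n * 2 ^ (k - 1) := by
  classical
  set F : Finset (Fin n → ZMod 2) := Finset.univ.filter (· ∈ C) with hF
  have hmem : ∀ x, x ∈ F ↔ x ∈ C := by intro x; simp [hF]
  have hcard : F.card = 2 ^ k := by
    have h1 : Fintype.card C = 2 ^ k := by
      have := Module.card_eq_pow_finrank (K := ZMod 2) (V := C)
      rw [ZMod.card, hfr] at this
      exact this
    rw [← h1]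
    simp [hF, Fintype.card_subtype]
  -- column bound
  have hcol : ∀ i : Fin n, (F.filter fun x => x i ≠ 0).card ≤ 2 ^ (k - 1) := by
    intro i
    set A := F.filter fun x => x i ≠ 0 with hA
    by_cases hne : A.Nonempty
    · obtain ⟨z, hz⟩ := hne
      have hzC : z ∈ C := (hmem z).1 (mem_filter.1 hz).1
      have hzi : z i ≠ 0 := (mem_filter.1 hz).2
      set B := F.filter fun x => ¬ x i ≠ 0 with hB
      have hAB : A.card ≤ B.card := by
        apply Finset.card_le_card_of_injOn (fun x => x + z)
        · intro x hx
          have hxC : x ∈ C := (hmem x).1 (mem_filter.1 hx).1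
          have hxi : x i ≠ 0 := (mem_filter.1 hx).2
          refine mem_filter.2 ⟨(hmem _).2 (C.add_mem hxC hzC), ?_⟩
          simp [zmod2_add_ne_s15 _ _ hxi hzi]
        · intro a _ b _ hab
          exact add_right_cancel hab
      have hsum : A.card + B.card = 2 ^ k := by
        rw [hA, hB, Finset.card_filter_add_card_filter_not (s := F), hcard]
      have h2 : 2 ^ k = 2 * 2 ^ (k - 1) := by
        rw [← pow_succ']
        congr 1
        omega
      omega
    · rw [Finset.not_nonempty_iff_eq_empty] at hne
      simp [hne]
  -- total weight bound
  have htot : ∑ x ∈ F, hammingNorm x ≤ n * 2 ^ (k - 1) := by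
    have : ∑ x ∈ F, hammingNorm x = ∑ i : Fin n, (F.filter fun x => x i ≠ 0).card := by
      simp only [hammingNorm, Finset.card_filter]
      rw [Finset.sum_comm]
    rw [this]
    calc ∑ i : Fin n, (F.filter fun x => x i ≠ 0).card ≤ ∑ _i : Fin n, 2 ^ (k - 1) :=
          Finset.sum_le_sum fun i _ => hcol i
      _ = n * 2 ^ (k - 1) := by simp [mul_comm]
  -- lower bound
  have hlow : (2 ^ k - 1) * d ≤ ∑ x ∈ F, hammingNorm x := by
    have h0 : (0 : Fin n → ZMod 2) ∈ F := (hmem 0).2 C.zero_mem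
    have hce : (F.erase 0).card = 2 ^ k - 1 := by
      rw [Finset.card_erase_of_mem h0, hcard]
    calc (2 ^ k - 1) * d = (F.erase 0).card • d := by rw [hce]; simp [smul_eq_mul]
      _ ≤ ∑ x ∈ F.erase 0, hammingNorm x := by
          apply Finset.card_nsmul_le_sum
          intro x hx
          exact hd x ((hmem x).1 (Finset.mem_of_mem_erase hx)) (Finset.ne_of_mem_erase hx)
      _ ≤ ∑ x ∈ F, hammingNorm x :=
          Finset.sum_le_sum_of_subset (Finset.erase_subset _ _)
  omega
open Finset

lemma zmod2_sum_eq_card {ι : Type*} [DecidableEq ι] (T : Finset ι) (y : ι → ZMod 2)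
    [DecidablePred fun i => y i ≠ 0] :
    ∑ i ∈ T, y i = ((T.filter fun i => y i ≠ 0).card : ZMod 2) := by
  rw [← Finset.sum_filter_ne_zero]
  have : ∀ i ∈ T.filter fun i => y i ≠ 0, y i = 1 := by
    intro i hi
    have := (Finset.mem_filter.1 hi).2
    revert this
    generalize y i = a
    revert a; decide
  rw [Finset.sum_congr rfl this]
  simp [Finset.sum_const]

lemma hn_eq {n : ℕ} (x : Fin n → ZMod 2) [DecidablePred fun i => x i ≠ 0] :
    hammingNorm x = (Finset.univ.filter fun i => x i ≠ 0).card := by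
  unfold hammingNorm
  congr 1
  apply Finset.filter_congr_decidable

lemma zmod2_eq_one {a : ZMod 2} (h : a ≠ 0) : a = 1 := by revert h; revert a; decide

lemma zmod2_mul_self (a : ZMod 2) : a * a = a := by revert a; decide



/-- For `m ≥ 1`: any binary `[31m+13, 5]` code has minimum distance at most `16m+6`;
there is no even-like binary `[15m+7, 4]` code with minimum distance `≥ 8m+4`; and
consequently there is no binary self-orthogonal `[31m+13, 5, 16m+6]` code. -/
theorem no_so_31m13 (m : ℕ) (hm : 1 ≤ m) :
    (∀ (C : Submodule (ZMod 2) (Fin (31 * m + 13) → ZMod 2)) (d : ℕ),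
      Module.finrank (ZMod 2) C = 5 → IsMinDist C d → d ≤ 16 * m + 6) ∧
    (¬ ∃ C : Submodule (ZMod 2) (Fin (15 * m + 7) → ZMod 2),
      Module.finrank (ZMod 2) C = 4 ∧ (∀ x ∈ C, ∑ i, x i = 0) ∧
        ∀ x ∈ C, x ≠ 0 → 8 * m + 4 ≤ hammingNorm x) ∧
    (¬ ∃ C : Submodule (ZMod 2) (Fin (31 * m + 13) → ZMod 2),
      IsSO C ∧ Module.finrank (ZMod 2) C = 5 ∧ IsMinDist C (16 * m + 6)) := by
  classical
  have part1 : ∀ (C : Submodule (ZMod 2) (Fin (31 * m + 13) → ZMod 2)) (d : ℕ),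
      Module.finrank (ZMod 2) C = 5 → IsMinDist C d → d ≤ 16 * m + 6 := by
    intro C d h5 hmd
    have := counting (k := 5) (by norm_num) C h5 hmd.2
    norm_num at this
    omega
  have part2 : ¬ ∃ C : Submodule (ZMod 2) (Fin (15 * m + 7) → ZMod 2),
      Module.finrank (ZMod 2) C = 4 ∧ (∀ x ∈ C, ∑ i, x i = 0) ∧
        ∀ x ∈ C, x ≠ 0 → 8 * m + 4 ≤ hammingNorm x := by
    rintro ⟨C, h4, _, hdist⟩
    have := counting (k := 4) (by norm_num) C h4 hdist
    norm_num at this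
    omega
  refine ⟨part1, part2, ?_⟩
  rintro ⟨C, hso, h5, ⟨⟨c, hcC, hc0, hcw⟩, hmin⟩⟩
  apply part2
  -- support of c
  set S : Finset (Fin (31 * m + 13)) := Finset.univ.filter fun i => c i ≠ 0 with hS
  have hScard : S.card = 16 * m + 6 := by rw [← hn_eq c]; exact hcw
  have hSc : Sᶜ.card = 15 * m + 7 := by
    have := Finset.card_compl S
    simp only [Fintype.card_fin] at this
    omega
  set eqv : (Sᶜ : Finset (Fin (31 * m + 13))) ≃ Fin (15 * m + 7) :=
    Finset.equivFinOfCardEq hSc with heqv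
  set π : (Fin (31 * m + 13) → ZMod 2) →ₗ[ZMod 2] (Fin (15 * m + 7) → ZMod 2) :=
    LinearMap.funLeft (ZMod 2) (ZMod 2) (fun j => (eqv.symm j : Fin (31 * m + 13))) with hπ
  have hπ_apply : ∀ x j, π x j = x (eqv.symm j) := fun _ _ => rfl
  -- norms under π
  have hnormπ : ∀ x : Fin (31 * m + 13) → ZMod 2,
      hammingNorm (π x) = (Sᶜ.filter fun i => x i ≠ 0).card := by
    intro x
    rw [hn_eq]
    apply Finset.card_bij (fun j _ => (eqv.symm j : Fin (31 * m + 13)))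
    · intro j hj
      refine Finset.mem_filter.2 ⟨(eqv.symm j).2, ?_⟩
      exact (Finset.mem_filter.1 hj).2
    · intro a _ b _ hab
      have : eqv.symm a = eqv.symm b := Subtype.ext hab
      exact eqv.symm.injective this
    · intro i hi
      obtain ⟨hi1, hi2⟩ := Finset.mem_filter.1 hi
      refine ⟨eqv ⟨i, hi1⟩, ?_, ?_⟩
      · refine Finset.mem_filter.2 ⟨Finset.mem_univ _, ?_⟩
        rw [hπ_apply]
        simpa using hi2
      · simp
  -- sum over complement is zero for codewords
  have hsumc : ∀ y ∈ C, ∑ i ∈ Sᶜ, y i = 0 := by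
    intro y hy
    have h1 : ∑ i ∈ S, y i + ∑ i ∈ Sᶜ, y i = ∑ i, y i := Finset.sum_add_sum_compl S y
    have h2 : ∑ i, y i = 0 := by
      have := hso y hy y hy
      simpa [zmod2_mul_self] using this
    have h3 : ∑ i ∈ S, y i = 0 := by
      have h4 := hso y hy c hcC
      have h5 : ∑ i, y i * c i = ∑ i ∈ S, y i := by
        rw [← Finset.sum_add_sum_compl S (fun i => y i * c i)]
        have e1 : ∑ i ∈ S, y i * c i = ∑ i ∈ S, y i := by
          apply Finset.sum_congr rfl
          intro i hi
          rw [zmod2_eq_one (Finset.mem_filter.1 hi).2, mul_one]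
        have e2 : ∑ i ∈ Sᶜ, y i * c i = 0 := by
          apply Finset.sum_eq_zero
          intro i hi
          have : ¬ c i ≠ 0 := by
            have := Finset.mem_compl.1 hi
            simpa [hS] using this
          rw [not_not.1 this, mul_zero]
        rw [e1, e2, add_zero]
      rw [← h5, h4]
    rw [h3, zero_add] at h1
    rw [h1, h2]
  -- the shortened code
  refine ⟨C.map π, ?_, ?_, ?_⟩
  · -- finrank 4
    have hv0 : (⟨c, hcC⟩ : C) ≠ 0 := fun h => hc0 (congrArg Subtype.val h)
    have hker : LinearMap.ker (π ∘ₗ C.subtype) = Submodule.span (ZMod 2) {(⟨c, hcC⟩ : C)} := by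
      apply le_antisymm
      · intro x hx
        rw [Submodule.mem_span_singleton]
        have hx' : π (x : Fin (31 * m + 13) → ZMod 2) = 0 := LinearMap.mem_ker.1 hx
        have hzero : ∀ i ∈ Sᶜ, (x : Fin (31 * m + 13) → ZMod 2) i = 0 := by
          intro i hi
          have h := congrFun hx' (eqv ⟨i, hi⟩)
          rw [hπ_apply] at h
          simpa using h
        by_cases h0 : (x : Fin (31 * m + 13) → ZMod 2) = 0
        · exact ⟨0, by rw [zero_smul]; exact (Subtype.ext h0).symm⟩
        · have hsub : (Finset.univ.filter fun i => (x : Fin (31 * m + 13) → ZMod 2) i ≠ 0) ⊆ S := by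
            intro i hi
            by_contra hiS
            exact (Finset.mem_filter.1 hi).2 (hzero i (Finset.mem_compl.2 hiS))
          have hwt := hmin _ x.2 h0
          rw [hn_eq] at hwt
          have heq : (Finset.univ.filter fun i => (x : Fin (31 * m + 13) → ZMod 2) i ≠ 0) = S :=
            Finset.eq_of_subset_of_card_le hsub (by omega)
          refine ⟨1, ?_⟩
          rw [one_smul]
          apply Subtype.ext
          show c = (x : Fin (31 * m + 13) → ZMod 2)
          funext i
          by_cases hci : c i ≠ 0
          · have hiS : i ∈ S := Finset.mem_filter.2 ⟨Finset.mem_univ _, hci⟩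
            rw [← heq] at hiS
            have hxi := (Finset.mem_filter.1 hiS).2
            rw [zmod2_eq_one hci, zmod2_eq_one hxi]
          · rw [not_not.1 hci]
            have hic : i ∈ Sᶜ := Finset.mem_compl.2 (fun h => hci (Finset.mem_filter.1 h).2)
            exact (hzero i hic).symm
      · rw [Submodule.span_le]
        intro x hx
        rw [Set.mem_singleton_iff] at hx
        subst hx
        show (⟨c, hcC⟩ : C) ∈ LinearMap.ker (π ∘ₗ C.subtype)
        rw [LinearMap.mem_ker]
        show π c = 0
        funext j
        rw [hπ_apply]
        have hic := Finset.mem_compl.1 (eqv.symm j).2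
        simp only [hS, Finset.mem_filter, Finset.mem_univ, true_and, not_not] at hic
        simpa using hic
    have h1 : Module.finrank (ZMod 2) (LinearMap.ker (π ∘ₗ C.subtype)) = 1 := by
      rw [hker]; exact finrank_span_singleton hv0
    have h2 : LinearMap.range (π ∘ₗ C.subtype) = C.map π := by
      rw [LinearMap.range_comp, Submodule.range_subtype]
    have hrk := LinearMap.finrank_range_add_finrank_ker (π ∘ₗ C.subtype)
    rw [h1, h2, h5] at hrk
    omega
  · -- even-like
    rintro x ⟨y, hy, rfl⟩
    calc ∑ j, π y j = ∑ i ∈ Sᶜ, y i := by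
          rw [← Finset.sum_attach Sᶜ y]
          exact Fintype.sum_equiv eqv.symm _ _ (fun j => rfl)
      _ = 0 := hsumc y hy
  · -- min distance
    rintro x ⟨y, hy, rfl⟩ hx0
    have hb : hammingNorm (π y) = (Sᶜ.filter fun i => y i ≠ 0).card := hnormπ y
    set b := (Sᶜ.filter fun i => y i ≠ 0).card with hbdef
    set a := (S.filter fun i => y i ≠ 0).card with hadef
    -- y ≠ 0 and y ≠ c
    have hy0 : y ≠ 0 := by rintro rfl; simp at hx0
    have hyc : y ≠ c := by
      rintro rfl
      apply hx0
      funext j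
      rw [hπ_apply]
      have : (eqv.symm j : Fin (31 * m + 13)) ∈ Sᶜ := (eqv.symm j).2
      have := Finset.mem_compl.1 this
      simp only [hS, Finset.mem_filter, Finset.mem_univ, true_and, not_not] at this
      exact this
    -- weight splitting for any vector
    have hsplit : ∀ z : Fin (31 * m + 13) → ZMod 2,
        hammingNorm z = (S.filter fun i => z i ≠ 0).card + (Sᶜ.filter fun i => z i ≠ 0).card := by
      intro z
      rw [hn_eq]
      rw [← Finset.union_compl S, Finset.filter_union,
        Finset.card_union_of_disjoint
          (Finset.disjoint_filter_filter disjoint_compl_right)]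
    have hwy : 16 * m + 6 ≤ a + b := by
      have := hmin y hy hy0
      rw [hsplit y] at this
      exact this
    -- weight of y + c
    have hycC : y + c ∈ C := C.add_mem hy hcC
    have hyc0 : y + c ≠ 0 := by
      intro h
      apply hyc
      have : y + c + c = c := by rw [h]; rw [zero_add]
      rwa [add_assoc, CharTwo.add_self_eq_zero, add_zero] at this
    have hwyc := hmin (y + c) hycC hyc0
    rw [hsplit (y + c)] at hwyc
    have hb2 : (Sᶜ.filter fun i => (y + c) i ≠ 0).card = b := by
      congr 1
      apply Finset.filter_congr
      intro i hi
      have hci : c i = 0 := by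
        have := Finset.mem_compl.1 hi
        simpa [hS, not_not] using this
      simp [hci]
    have ha2 : (S.filter fun i => (y + c) i ≠ 0).card + a = S.card := by
      have : (S.filter fun i => (y + c) i ≠ 0) = S.filter fun i => ¬ y i ≠ 0 := by
        apply Finset.filter_congr
        intro i hi
        have hci : c i = 1 := zmod2_eq_one (Finset.mem_filter.1 hi).2
        simp only [Pi.add_apply, hci]
        constructor
        · intro h
          intro hne
          rw [zmod2_eq_one hne] at h
          exact h (by decide)
        · intro h
          rw [not_not.1 h, zero_add]
          exact one_ne_zero
      rw [this, add_comm]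
      exact Finset.card_filter_add_card_filter_not (s := S) (p := fun i => y i ≠ 0)
    -- evenness of b
    have hbeven : 2 ∣ b := by
      have h0 := hsumc y hy
      rw [zmod2_sum_eq_card] at h0
      exact (ZMod.natCast_eq_zero_iff _ 2).1 h0
    rw [hb]
    omega
end
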